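/- The difference between consecutive positive zeros of the Bessel function J_ν tends to π: if λ_{ν,j} denotes the j-th positive zero of J_ν, then lim_{j→∞} (λ_{ν,j+1} − λ_{ν,j}) = π. -/

import Mathlib

open Real MeasureTheory Filter

/-- Bessel function of the first kind of order `ν`, via its standard power series. -/
noncomputable def besselJ (ν x : ℝ) : ℝ :=
  ∑' m : ℕ, ((-1 : ℝ) ^ m / (Nat.factorial m * Real.Gamma ((m : ℝ) + ν + 1))) *
    (x / 2) ^ (2 * (m : ℝ) + ν)

namespace BesselGap

noncomputable def d (ν : ℝ) (m : ℕ) : ℝ :=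
  (-1 : ℝ) ^ m / (Nat.factorial m * Real.Gamma ((m : ℝ) + ν + 1))

variable {ν : ℝ}

lemma gamma_pos (hν : 0 ≤ ν) (m : ℕ) : 0 < Real.Gamma ((m : ℝ) + ν + 1) := by
  apply Real.Gamma_pos_of_pos
  positivity

lemma abs_d (hν : 0 ≤ ν) (m : ℕ) :
    |d ν m| = 1 / (Nat.factorial m * Real.Gamma ((m : ℝ) + ν + 1)) := by
  rw [d, abs_div, abs_pow, abs_neg, abs_one, one_pow]
  congr 1
  rw [abs_of_pos]
  have := gamma_pos hν m
  have : (0:ℝ) < Nat.factorial m := by positivity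
  positivity

lemma d_rec (hν : 0 ≤ ν) (m : ℕ) :
    ((m : ℝ) + 1) * ((m : ℝ) + ν + 1) * d ν (m + 1) = - d ν m := by
  have h1 : ((m : ℝ) + ν + 1) ≠ 0 := by positivity
  have h2 : Real.Gamma ((m : ℝ) + ν + 1) ≠ 0 := (gamma_pos hν m).ne'
  have h3 : (Nat.factorial m : ℝ) ≠ 0 := by positivity
  have key : Real.Gamma ((↑(m + 1) : ℝ) + ν + 1) = ((m : ℝ) + ν + 1) * Real.Gamma ((m : ℝ) + ν + 1) := by
    rw [show ((↑(m + 1) : ℝ) + ν + 1) = ((m : ℝ) + ν + 1) + 1 by push_cast; ring,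
      Real.Gamma_add_one h1]
  simp only [d, key, Nat.factorial_succ]
  push_cast
  field_simp
  ring

lemma fact_gamma (hν : 0 ≤ ν) (m : ℕ) :
    (Nat.factorial m : ℝ) * Real.Gamma (ν + 1) ≤ Real.Gamma ((m : ℝ) + ν + 1) := by
  induction m with
  | zero => simp
  | succ n ih =>
    have h1 : ((n : ℝ) + ν + 1) ≠ 0 := by positivity
    have key : Real.Gamma ((↑(n + 1) : ℝ) + ν + 1)
        = ((n : ℝ) + ν + 1) * Real.Gamma ((n : ℝ) + ν + 1) := by
      rw [show ((↑(n + 1) : ℝ) + ν + 1) = ((n : ℝ) + ν + 1) + 1 by push_cast; ring,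
        Real.Gamma_add_one h1]
    rw [key]
    have hg : 0 < Real.Gamma ((n : ℝ) + ν + 1) := gamma_pos hν n
    have h2 : ((n : ℝ) + 1) ≤ ((n : ℝ) + ν + 1) := by linarith
    calc (Nat.factorial (n + 1) : ℝ) * Real.Gamma (ν + 1)
        = ((n : ℝ) + 1) * ((Nat.factorial n : ℝ) * Real.Gamma (ν + 1)) := by
          push_cast [Nat.factorial_succ]; ring
      _ ≤ ((n : ℝ) + 1) * Real.Gamma ((n : ℝ) + ν + 1) := by
          apply mul_le_mul_of_nonneg_left ih (by positivity)
      _ ≤ ((n : ℝ) + ν + 1) * Real.Gamma ((n : ℝ) + ν + 1) := by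
          apply mul_le_mul_of_nonneg_right h2 hg.le

lemma abs_d_le (hν : 0 ≤ ν) (m : ℕ) :
    |d ν m| ≤ (1 / Real.Gamma (ν + 1)) * (1 / Nat.factorial m) := by
  rw [abs_d hν m]
  have hg : 0 < Real.Gamma ((m : ℝ) + ν + 1) := gamma_pos hν m
  have hg1 : 0 < Real.Gamma (ν + 1) := Real.Gamma_pos_of_pos (by linarith)
  have hf : (0:ℝ) < Nat.factorial m := by positivity
  have hone : (1:ℝ) ≤ Nat.factorial m := by exact_mod_cast Nat.one_le_iff_ne_zero.2 (Nat.factorial_ne_zero m)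
  have key := fact_gamma hν m
  rw [show (1:ℝ) / Real.Gamma (ν+1) * (1 / (Nat.factorial m : ℝ))
      = 1 / (Real.Gamma (ν+1) * (Nat.factorial m : ℝ)) by rw [div_mul_div_comm, one_mul]]
  apply one_div_le_one_div_of_le (by positivity)
  nlinarith [hg, hone, key]

lemma summable_base (hν : 0 ≤ ν) {r : ℝ} (hr : 0 ≤ r) :
    Summable (fun m => |d ν m| * r ^ m) := by
  refine Summable.of_nonneg_of_le (fun m => by positivity) (fun m => ?_)
    ((Real.summable_pow_div_factorial r).mul_left (1 / Real.Gamma (ν + 1)))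
  calc |d ν m| * r ^ m ≤ ((1 / Real.Gamma (ν + 1)) * (1 / Nat.factorial m)) * r ^ m :=
      mul_le_mul_of_nonneg_right (abs_d_le hν m) (by positivity)
      _ = (1 / Real.Gamma (ν + 1)) * (r ^ m / Nat.factorial m) := by ring

lemma hasDerivAt_tsum_pow (c : ℕ → ℝ)
    (hs : ∀ r : ℝ, 0 ≤ r → Summable (fun m : ℕ => |c m| * r ^ m))
    (hs' : ∀ r : ℝ, 0 ≤ r → Summable (fun m : ℕ => ((m : ℝ) + 1) * |c (m + 1)| * r ^ m))
    (t : ℝ) :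
    HasDerivAt (fun x : ℝ => ∑' m : ℕ, c m * x ^ m)
      (∑' m : ℕ, ((m : ℝ) + 1) * c (m + 1) * t ^ m) t := by
  set R : ℝ := |t| + 1 with hR
  have hR0 : 0 ≤ R := by positivity
  set s : Set ℝ := Metric.ball (0 : ℝ) R with hsdef
  have hts : t ∈ s := by
    simp only [hsdef, Metric.mem_ball, Real.dist_eq, sub_zero]
    linarith [abs_nonneg t]
  have hxR : ∀ x ∈ s, |x| ≤ R := by
    intro x hx
    simp only [hsdef, Metric.mem_ball, Real.dist_eq, sub_zero] at hx
    exact hx.le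
  have hunif : TendstoUniformlyOn
      (fun (n : ℕ) (x : ℝ) => ∑ i ∈ Finset.range n, ((i : ℝ) + 1) * c (i + 1) * x ^ i)
      (fun x => ∑' m : ℕ, ((m : ℝ) + 1) * c (m + 1) * x ^ m) atTop s := by
    apply tendstoUniformlyOn_tsum_nat (hs' R hR0)
    intro n x hx
    have he : ‖((n : ℝ) + 1) * c (n + 1) * x ^ n‖ = ((n : ℝ) + 1) * |c (n + 1)| * |x| ^ n := by
      rw [norm_mul, norm_mul, Real.norm_eq_abs, Real.norm_eq_abs, Real.norm_eq_abs,
        abs_pow, abs_of_nonneg (by positivity : (0:ℝ) ≤ (n : ℝ) + 1)]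
    rw [he]
    gcongr
    exact hxR x hx
  have hder : ∀ (n : ℕ), ∀ x ∈ s, HasDerivAt
      (fun x : ℝ => ∑ i ∈ Finset.range (n + 1), c i * x ^ i)
      (∑ i ∈ Finset.range n, ((i : ℝ) + 1) * c (i + 1) * x ^ i) x := by
    intro n x _
    have h : HasDerivAt (fun x : ℝ => ∑ i ∈ Finset.range (n + 1), c i * x ^ i)
        (∑ i ∈ Finset.range (n + 1), c i * ((i : ℝ) * x ^ (i - 1))) x := by
      apply HasDerivAt.fun_sum
      intro i _
      exact (hasDerivAt_pow i x).const_mul (c i)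
    have e : (∑ i ∈ Finset.range (n + 1), c i * ((i : ℝ) * x ^ (i - 1)))
        = ∑ i ∈ Finset.range n, ((i : ℝ) + 1) * c (i + 1) * x ^ i := by
      rw [Finset.sum_range_succ']
      simp only [Nat.cast_zero, zero_mul, mul_zero, add_zero, Nat.add_sub_cancel]
      apply Finset.sum_congr rfl
      intro i _
      push_cast
      ring
    exact e ▸ h
  have hptw : ∀ x ∈ s, Tendsto (fun n : ℕ => ∑ i ∈ Finset.range (n + 1), c i * x ^ i)
      atTop (nhds (∑' m : ℕ, c m * x ^ m)) := by
    intro x hx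
    have habs : Summable (fun m : ℕ => |c m * x ^ m|) := by
      refine Summable.of_nonneg_of_le (fun m => abs_nonneg _) (fun m => ?_) (hs R hR0)
      rw [abs_mul, abs_pow]
      gcongr
      exact hxR x hx
    exact habs.of_abs.hasSum.tendsto_sum_nat.comp (tendsto_add_atTop_nat 1)
  exact hasDerivAt_of_tendstoUniformlyOn Metric.isOpen_ball hunif
    (Filter.Eventually.of_forall hder) hptw hts


noncomputable def G (ν t : ℝ) : ℝ := ∑' m : ℕ, d ν m * t ^ m

noncomputable def G1 (ν t : ℝ) : ℝ := ∑' m : ℕ, ((m : ℝ) + 1) * d ν (m + 1) * t ^ m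

noncomputable def G2 (ν t : ℝ) : ℝ :=
  ∑' m : ℕ, ((m : ℝ) + 1) * (((m : ℝ) + 2) * d ν (m + 2)) * t ^ m

lemma bb1 (hν : 0 ≤ ν) (m : ℕ) : ((m : ℝ) + 1) * |d ν (m + 1)| ≤ |d ν m| := by
  have h := d_rec hν m
  have hp : (0:ℝ) < ((m : ℝ) + 1) * ((m : ℝ) + ν + 1) := by positivity
  have habs : ((m : ℝ) + 1) * ((m : ℝ) + ν + 1) * |d ν (m + 1)| = |d ν m| := by
    rw [← abs_of_pos hp, ← abs_mul, h, abs_neg]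
  nlinarith [abs_nonneg (d ν (m + 1)),
    mul_nonneg (mul_nonneg (by positivity : (0:ℝ) ≤ (m:ℝ)+1) (by linarith [Nat.cast_nonneg (α := ℝ) m] : (0:ℝ) ≤ (m:ℝ)+ν)) (abs_nonneg (d ν (m+1)))]

lemma bb2 (hν : 0 ≤ ν) (m : ℕ) : (m : ℝ) * ((m : ℝ) + 1) * |d ν (m + 1)| ≤ |d ν m| := by
  have h := d_rec hν m
  have hp : (0:ℝ) < ((m : ℝ) + 1) * ((m : ℝ) + ν + 1) := by positivity
  have habs : ((m : ℝ) + 1) * ((m : ℝ) + ν + 1) * |d ν (m + 1)| = |d ν m| := by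
    rw [← abs_of_pos hp, ← abs_mul, h, abs_neg]
  nlinarith [abs_nonneg (d ν (m + 1)),
    mul_nonneg (mul_nonneg (by positivity : (0:ℝ) ≤ (m:ℝ)+1) (by linarith : (0:ℝ) ≤ ν+1)) (abs_nonneg (d ν (m+1)))]

lemma summable_S1 (hν : 0 ≤ ν) {r : ℝ} (hr : 0 ≤ r) :
    Summable (fun m : ℕ => ((m : ℝ) + 1) * |d ν (m + 1)| * r ^ m) := by
  refine Summable.of_nonneg_of_le (fun m => by positivity) (fun m => ?_) (summable_base hν hr)
  exact mul_le_mul_of_nonneg_right (bb1 hν m) (by positivity)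

lemma summable_S2 (hν : 0 ≤ ν) {r : ℝ} (hr : 0 ≤ r) :
    Summable (fun m : ℕ => ((m : ℝ) + 1) * (((m : ℝ) + 2) * |d ν (m + 2)|) * r ^ m) := by
  refine Summable.of_nonneg_of_le (fun m => by positivity) (fun m => ?_) (summable_S1 hν hr)
  have h := bb1 hν (m + 1)
  push_cast at h
  have h2 : ((m : ℝ) + 2) * |d ν (m + 2)| ≤ |d ν (m + 1)| := by
    calc ((m : ℝ) + 2) * |d ν (m + 2)| = ((m : ℝ) + 1 + 1) * |d ν (m + 2)| := by ring
      _ ≤ |d ν (m + 1)| := h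
  have h3 : ((m : ℝ) + 1) * (((m : ℝ) + 2) * |d ν (m + 2)|) ≤ ((m : ℝ) + 1) * |d ν (m + 1)| :=
    mul_le_mul_of_nonneg_left h2 (by positivity)
  exact mul_le_mul_of_nonneg_right h3 (by positivity)

lemma summable_SS (hν : 0 ≤ ν) {r : ℝ} (hr : 0 ≤ r) :
    Summable (fun m : ℕ => (m : ℝ) * ((m : ℝ) + 1) * |d ν (m + 1)| * r ^ m) := by
  refine Summable.of_nonneg_of_le (fun m => by positivity) (fun m => ?_) (summable_base hν hr)
  exact mul_le_mul_of_nonneg_right (bb2 hν m) (by positivity)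

lemma hasDerivAt_G (hν : 0 ≤ ν) (t : ℝ) : HasDerivAt (G ν) (G1 ν t) t := by
  apply hasDerivAt_tsum_pow (d ν) (fun r hr => summable_base hν hr) (fun r hr => summable_S1 hν hr)

lemma hasDerivAt_G1 (hν : 0 ≤ ν) (t : ℝ) : HasDerivAt (G1 ν) (G2 ν t) t := by
  have h := hasDerivAt_tsum_pow (fun m => ((m : ℝ) + 1) * d ν (m + 1))
    (fun r hr => ?_) (fun r hr => ?_) t
  · have e : G2 ν t = ∑' m : ℕ, ((m : ℝ) + 1) * (((↑(m + 1) : ℝ) + 1) * d ν (m + 1 + 1)) * t ^ m := by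
      rw [G2]
      apply tsum_congr; intro m; push_cast; ring
    have e2 : (fun x : ℝ => ∑' m : ℕ, ((m : ℝ) + 1) * d ν (m + 1) * x ^ m) = G1 ν := by
      funext x; rw [G1]
    rw [e]
    exact e2 ▸ h
  · apply (summable_S1 hν hr).congr
    intro m
    rw [abs_mul, abs_of_nonneg (by positivity : (0:ℝ) ≤ (m : ℝ) + 1)]
  · apply (summable_S2 hν hr).congr
    intro m
    rw [abs_mul, abs_of_nonneg (by positivity : (0:ℝ) ≤ (↑(m + 1) : ℝ) + 1)]
    push_cast
    ring

lemma G_ode (hν : 0 ≤ ν) (t : ℝ) : t * G2 ν t + (ν + 1) * G1 ν t + G ν t = 0 := by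
  have ht : (0:ℝ) ≤ |t| := abs_nonneg t
  have sum0 : Summable (fun m : ℕ => d ν m * t ^ m) := by
    apply Summable.of_abs
    apply (summable_base hν ht).congr
    intro m; rw [abs_mul, abs_pow]
  have sumS : Summable (fun m : ℕ => (m : ℝ) * ((m : ℝ) + 1) * d ν (m + 1) * t ^ m) := by
    apply Summable.of_abs
    apply (summable_SS hν ht).congr
    intro m
    rw [abs_mul, abs_mul, abs_mul, abs_pow,
      abs_of_nonneg (show (0:ℝ) ≤ (m : ℝ) from Nat.cast_nonneg m),
      abs_of_nonneg (show (0:ℝ) ≤ (m : ℝ) + 1 by positivity)]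
  have sum1 : Summable (fun m : ℕ => (ν + 1) * (((m : ℝ) + 1) * d ν (m + 1) * t ^ m)) := by
    apply Summable.mul_left
    apply Summable.of_abs
    apply (summable_S1 hν ht).congr
    intro m
    rw [abs_mul, abs_mul, abs_pow, abs_of_nonneg (by positivity : (0:ℝ) ≤ (m : ℝ) + 1)]
  have e1 : t * G2 ν t = ∑' m : ℕ, (m : ℝ) * ((m : ℝ) + 1) * d ν (m + 1) * t ^ m := by
    rw [G2, ← tsum_mul_left, Summable.tsum_eq_zero_add sumS]
    simp only [Nat.cast_zero, zero_mul, zero_add]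
    apply tsum_congr; intro m; push_cast; ring
  have e3 : (ν + 1) * G1 ν t = ∑' m : ℕ, (ν + 1) * (((m : ℝ) + 1) * d ν (m + 1) * t ^ m) := by
    rw [G1, tsum_mul_left]
  rw [e1, e3, G, ← Summable.tsum_add sumS sum1, ← Summable.tsum_add (sumS.add sum1) sum0]
  have : ∀ m : ℕ, (m : ℝ) * ((m : ℝ) + 1) * d ν (m + 1) * t ^ m
      + (ν + 1) * (((m : ℝ) + 1) * d ν (m + 1) * t ^ m) + d ν m * t ^ m = 0 := by
    intro m
    linear_combination (t ^ m) * d_rec hν m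
  calc (∑' m : ℕ, ((m : ℝ) * ((m : ℝ) + 1) * d ν (m + 1) * t ^ m
      + (ν + 1) * (((m : ℝ) + 1) * d ν (m + 1) * t ^ m) + d ν m * t ^ m))
      = ∑' _ : ℕ, (0:ℝ) := by apply tsum_congr; intro m; rw [this m]
    _ = 0 := tsum_zero


noncomputable def uB (ν x : ℝ) : ℝ := x ^ (ν + 1/2 : ℝ) * G ν (x ^ 2 / 4)

noncomputable def uB1 (ν x : ℝ) : ℝ :=
  (ν + 1/2) * x ^ (ν - 1/2 : ℝ) * G ν (x ^ 2 / 4)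
    + x ^ (ν + 1/2 : ℝ) * (G1 ν (x ^ 2 / 4) * (x / 2))

noncomputable def qB (ν x : ℝ) : ℝ := 1 + (1/4 - ν ^ 2) / x ^ 2

lemma besselJ_eq (hν : 0 ≤ ν) {x : ℝ} (hx : 0 < x) :
    besselJ ν x = (x / 2) ^ (ν : ℝ) * G ν (x ^ 2 / 4) := by
  have h2 : (0:ℝ) < x / 2 := by linarith
  rw [besselJ, G, ← tsum_mul_left]
  apply tsum_congr
  intro m
  have e1 : (x / 2) ^ (2 * (m : ℝ) + ν) = (x / 2) ^ (2 * (m : ℝ)) * (x / 2) ^ (ν : ℝ) :=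
    Real.rpow_add h2 _ _
  have e2 : (x / 2) ^ (2 * (m : ℝ)) = (x ^ 2 / 4) ^ m := by
    rw [show (2 * (m : ℝ)) = ((2 * m : ℕ) : ℝ) by push_cast; ring, Real.rpow_natCast,
      pow_mul]
    congr 1
    rw [div_pow]
    norm_num
  rw [e1, e2, d]
  ring

lemma uB_eq (hν : 0 ≤ ν) {x : ℝ} (hx : 0 < x) :
    uB ν x = (2:ℝ) ^ (ν : ℝ) * x ^ ((1:ℝ)/2) * besselJ ν x := by
  have h2 : (0:ℝ) < x / 2 := by linarith
  rw [uB, besselJ_eq hν hx]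
  have e : (2:ℝ) ^ (ν:ℝ) * x ^ ((1:ℝ)/2) * ((x / 2) ^ (ν:ℝ) * G ν (x ^ 2 / 4))
      = ((2:ℝ) ^ (ν:ℝ) * (x / 2) ^ (ν:ℝ)) * x ^ ((1:ℝ)/2) * G ν (x ^ 2 / 4) := by ring
  rw [e, ← Real.mul_rpow (by norm_num) h2.le]
  rw [show (2:ℝ) * (x / 2) = x by ring]
  rw [← Real.rpow_add hx]

lemma uB_zero_iff (hν : 0 ≤ ν) {x : ℝ} (hx : 0 < x) :
    uB ν x = 0 ↔ besselJ ν x = 0 := by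
  rw [uB_eq hν hx]
  constructor
  · intro h
    have h1 : (0:ℝ) < (2:ℝ) ^ (ν:ℝ) * x ^ ((1:ℝ)/2) := by
      apply mul_pos (Real.rpow_pos_of_pos (by norm_num) _) (Real.rpow_pos_of_pos hx _)
    rcases mul_eq_zero.1 h with h' | h'
    · exact absurd h' h1.ne'
    · exact h'
  · intro h; rw [h, mul_zero]

lemma hasDerivAt_t (x : ℝ) : HasDerivAt (fun x : ℝ => x ^ 2 / 4) (x / 2) x := by
  have h := (hasDerivAt_pow 2 x).div_const 4
  convert h using 1
  · rfl
  · rfl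
  push_cast
  ring

lemma hasDerivAt_uB (hν : 0 ≤ ν) {x : ℝ} (hx : 0 < x) :
    HasDerivAt (uB ν) (uB1 ν x) x := by
  have h1 : HasDerivAt (fun x : ℝ => x ^ (ν + 1/2 : ℝ)) ((ν + 1/2) * x ^ (ν + 1/2 - 1 : ℝ)) x :=
    Real.hasDerivAt_rpow_const (Or.inl hx.ne')
  have h2 : HasDerivAt (fun x : ℝ => G ν (x ^ 2 / 4)) (G1 ν (x ^ 2 / 4) * (x / 2)) x :=
    by have := (hasDerivAt_G hν (x ^ 2 / 4)).comp x (hasDerivAt_t x); exact this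
  have h := h1.mul h2
  have efun : (fun x : ℝ => x ^ (ν + 1/2 : ℝ) * G ν (x ^ 2 / 4)) = uB ν := by
    funext y; rw [uB]
  have heq : (ν + 1/2) * x ^ (ν + 1/2 - 1 : ℝ) * G ν (x ^ 2 / 4)
      + x ^ (ν + 1/2 : ℝ) * (G1 ν (x ^ 2 / 4) * (x / 2)) = uB1 ν x := by
    rw [uB1, show (ν + 1/2 - 1 : ℝ) = ν - 1/2 by ring]
  exact efun ▸ heq ▸ h

lemma hasDerivAt_uB1 (hν : 0 ≤ ν) {x : ℝ} (hx : 0 < x) :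
    HasDerivAt (uB1 ν) (-(qB ν x) * uB ν x) x := by
  have hx0 : x ≠ 0 := hx.ne'
  have h2 : HasDerivAt (fun x : ℝ => G ν (x ^ 2 / 4)) (G1 ν (x ^ 2 / 4) * (x / 2)) x :=
    by have := (hasDerivAt_G hν (x ^ 2 / 4)).comp x (hasDerivAt_t x); exact this
  have h3 : HasDerivAt (fun x : ℝ => G1 ν (x ^ 2 / 4)) (G2 ν (x ^ 2 / 4) * (x / 2)) x :=
    by have := (hasDerivAt_G1 hν (x ^ 2 / 4)).comp x (hasDerivAt_t x); exact this
  have hr1 : HasDerivAt (fun x : ℝ => x ^ (ν - 1/2 : ℝ)) ((ν - 1/2) * x ^ (ν - 1/2 - 1 : ℝ)) x :=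
    Real.hasDerivAt_rpow_const (Or.inl hx0)
  have hr2 : HasDerivAt (fun x : ℝ => x ^ (ν + 1/2 : ℝ)) ((ν + 1/2) * x ^ (ν + 1/2 - 1 : ℝ)) x :=
    Real.hasDerivAt_rpow_const (Or.inl hx0)
  have hhalf : HasDerivAt (fun x : ℝ => x / 2) (1/2 : ℝ) x := by
    simpa using (hasDerivAt_id x).div_const 2
  have hA : HasDerivAt (fun x : ℝ => (ν + 1/2) * x ^ (ν - 1/2 : ℝ) * G ν (x ^ 2 / 4))
      ((ν + 1/2) * ((ν - 1/2) * x ^ (ν - 1/2 - 1 : ℝ)) * G ν (x ^ 2 / 4)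
        + (ν + 1/2) * x ^ (ν - 1/2 : ℝ) * (G1 ν (x ^ 2 / 4) * (x / 2))) x :=
    ((hr1.const_mul (ν + 1/2)).mul h2)
  have hB : HasDerivAt (fun x : ℝ => x ^ (ν + 1/2 : ℝ) * (G1 ν (x ^ 2 / 4) * (x / 2)))
      ((ν + 1/2) * x ^ (ν + 1/2 - 1 : ℝ) * (G1 ν (x ^ 2 / 4) * (x / 2))
        + x ^ (ν + 1/2 : ℝ) * ((G2 ν (x ^ 2 / 4) * (x / 2)) * (x / 2)
          + G1 ν (x ^ 2 / 4) * (1/2))) x :=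
    hr2.mul (h3.mul hhalf)
  have h := hA.add hB
  have heq : ((ν + 1/2) * ((ν - 1/2) * x ^ (ν - 1/2 - 1 : ℝ)) * G ν (x ^ 2 / 4)
        + (ν + 1/2) * x ^ (ν - 1/2 : ℝ) * (G1 ν (x ^ 2 / 4) * (x / 2)))
      + ((ν + 1/2) * x ^ (ν + 1/2 - 1 : ℝ) * (G1 ν (x ^ 2 / 4) * (x / 2))
        + x ^ (ν + 1/2 : ℝ) * ((G2 ν (x ^ 2 / 4) * (x / 2)) * (x / 2)
          + G1 ν (x ^ 2 / 4) * (1/2)))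
      = -(qB ν x) * uB ν x := by
    rw [uB, qB]
    have hode := G_ode hν (x ^ 2 / 4)
    set A := G ν (x ^ 2 / 4) with hAdef
    set B := G1 ν (x ^ 2 / 4) with hBdef
    set C := G2 ν (x ^ 2 / 4) with hCdef
    have i0 : (ν - 1/2 - 1 : ℝ) = ν - 3/2 := by ring
    have i1 : x ^ (ν - 1/2 : ℝ) = x ^ (ν - 3/2 : ℝ) * x := by
      rw [show (ν - 1/2 : ℝ) = (ν - 3/2) + 1 by ring, Real.rpow_add hx, Real.rpow_one]
    have i2 : x ^ (ν + 1/2 : ℝ) = x ^ (ν - 3/2 : ℝ) * x ^ 2 := by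
      rw [show (ν + 1/2 : ℝ) = (ν - 3/2) + 2 by ring, Real.rpow_add hx,
        Real.rpow_two]
    have i3 : x ^ (ν + 1/2 - 1 : ℝ) = x ^ (ν - 3/2 : ℝ) * x := by
      rw [show (ν + 1/2 - 1 : ℝ) = (ν - 3/2) + 1 by ring, Real.rpow_add hx, Real.rpow_one]
    rw [i0, i1, i2, i3]
    have key : ((1/4 - ν^2)/x^2) * (x ^ (ν - 3/2 : ℝ) * x ^ 2 * A)
        = (1/4 - ν^2) * (x ^ (ν - 3/2 : ℝ) * A) := by
      field_simp
    linear_combination (x ^ (ν - 3/2 : ℝ) * x ^ 2) * hode + key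
  have efun : (fun x : ℝ => (ν + 1/2) * x ^ (ν - 1/2 : ℝ) * G ν (x ^ 2 / 4)
      + x ^ (ν + 1/2 : ℝ) * (G1 ν (x ^ 2 / 4) * (x / 2))) = uB1 ν := by
    funext y; rw [uB1]
  exact efun ▸ heq ▸ h


lemma deriv_nonneg_left {a b : ℝ} (hab : a < b) (u : ℝ → ℝ) (u' : ℝ)
    (hu : HasDerivAt u u' a) (hua : u a = 0)
    (hupos : ∀ x ∈ Set.Ioo a b, 0 < u x) : 0 ≤ u' := by
  have hT : Tendsto (slope u a) (nhdsWithin a (Set.Ioi a)) (nhds u') :=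
    (hasDerivAt_iff_tendsto_slope.mp hu).mono_left
      (nhdsWithin_mono a (fun x hx => ne_of_gt hx))
  have hev : ∀ᶠ x in nhdsWithin a (Set.Ioi a), 0 ≤ slope u a x := by
    filter_upwards [Ioo_mem_nhdsGT_of_mem (Set.mem_Ico.2 ⟨le_refl a, hab⟩)] with x hx
    rw [slope_def_field]
    have := hupos x hx
    have hxa : 0 < x - a := by linarith [hx.1]
    rw [div_eq_inv_mul]
    apply mul_nonneg (by positivity)
    rw [hua]; linarith
  exact ge_of_tendsto hT hev

lemma deriv_nonpos_right {a b : ℝ} (hab : a < b) (u : ℝ → ℝ) (u' : ℝ)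
    (hu : HasDerivAt u u' b) (hub : u b = 0)
    (hupos : ∀ x ∈ Set.Ioo a b, 0 < u x) : u' ≤ 0 := by
  have hT : Tendsto (slope u b) (nhdsWithin b (Set.Iio b)) (nhds u') :=
    (hasDerivAt_iff_tendsto_slope.mp hu).mono_left
      (nhdsWithin_mono b (fun x hx => ne_of_lt hx))
  have hev : ∀ᶠ x in nhdsWithin b (Set.Iio b), slope u b x ≤ 0 := by
    filter_upwards [Ioo_mem_nhdsLT_of_mem (Set.mem_Ioc.2 ⟨hab, le_refl b⟩)] with x hx
    rw [slope_def_field]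
    have := hupos x hx
    have hxb : x - b < 0 := by linarith [hx.2]
    rw [hub]
    apply div_nonpos_of_nonneg_of_nonpos (by linarith) (by linarith)
  exact le_of_tendsto hT hev

/-- Sturm comparison via the Wronskian. -/
lemma sturm {a b : ℝ} (hab : a < b) (u u' v v' q p : ℝ → ℝ)
    (hu : ∀ x ∈ Set.Icc a b, HasDerivAt u (u' x) x)
    (hu' : ∀ x ∈ Set.Icc a b, HasDerivAt u' (-(q x) * u x) x)
    (hv : ∀ x ∈ Set.Icc a b, HasDerivAt v (v' x) x)
    (hv' : ∀ x ∈ Set.Icc a b, HasDerivAt v' (-(p x) * v x) x)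
    (hua : u a = 0) (hub : u b = 0)
    (hupos : ∀ x ∈ Set.Ioo a b, 0 < u x)
    (hvpos : ∀ x ∈ Set.Ioo a b, 0 < v x)
    (hva : 0 ≤ v a) (hvb : 0 ≤ v b)
    (hqp : ∀ x ∈ Set.Ioo a b, q x < p x) : False := by
  set W : ℝ → ℝ := fun x => u x * v' x - u' x * v x with hWdef
  have hW : ∀ x ∈ Set.Icc a b, HasDerivAt W ((q x - p x) * (u x * v x)) x := by
    intro x hx
    have h := ((hu x hx).mul (hv' x hx)).sub ((hu' x hx).mul (hv x hx))
    convert h using 1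
    · rfl
    · rfl
    · rfl
    ring
  have hWcont : ContinuousOn W (Set.Icc a b) := fun x hx =>
    (hW x hx).continuousAt.continuousWithinAt
  have hanti : StrictAntiOn W (Set.Icc a b) := by
    apply strictAntiOn_of_deriv_neg (convex_Icc a b) hWcont
    intro x hx
    rw [interior_Icc] at hx
    rw [(hW x (Set.Ioo_subset_Icc_self hx)).deriv]
    have h1 := hqp x hx
    have h2 := hupos x hx
    have h3 := hvpos x hx
    have : q x - p x < 0 := by linarith
    exact mul_neg_of_neg_of_pos this (mul_pos h2 h3)
  have haI : a ∈ Set.Icc a b := Set.mem_Icc.2 ⟨le_refl a, hab.le⟩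
  have hbI : b ∈ Set.Icc a b := Set.mem_Icc.2 ⟨hab.le, le_refl b⟩
  have hu'a : 0 ≤ u' a := deriv_nonneg_left hab u (u' a) (hu a haI) hua hupos
  have hu'b : u' b ≤ 0 := deriv_nonpos_right hab u (u' b) (hu b hbI) hub hupos
  have hWa : W a ≤ 0 := by
    simp only [hWdef, hua, zero_mul, zero_sub, neg_nonpos]
    exact mul_nonneg hu'a hva
  have hWb : 0 ≤ W b := by
    simp only [hWdef, hub, zero_mul, zero_sub, neg_nonneg]
    exact mul_nonpos_of_nonpos_of_nonneg hu'b hvb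
  have := hanti haI hbI hab
  linarith


lemma endpoint_nonneg_left {a b : ℝ} (hab : a < b) (f : ℝ → ℝ) (hfa : ContinuousAt f a)
    (hpos : ∀ x ∈ Set.Ioo a b, 0 < f x) : 0 ≤ f a := by
  have hT : Tendsto f (nhdsWithin a (Set.Ioi a)) (nhds (f a)) :=
    hfa.continuousWithinAt
  refine ge_of_tendsto hT ?_
  filter_upwards [Ioo_mem_nhdsGT_of_mem (Set.mem_Ico.2 ⟨le_refl a, hab⟩)] with x hx
  exact (hpos x hx).le

lemma endpoint_nonneg_right {a b : ℝ} (hab : a < b) (f : ℝ → ℝ) (hfb : ContinuousAt f b)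
    (hpos : ∀ x ∈ Set.Ioo a b, 0 < f x) : 0 ≤ f b := by
  have hT : Tendsto f (nhdsWithin b (Set.Iio b)) (nhds (f b)) :=
    hfb.continuousWithinAt
  refine ge_of_tendsto hT ?_
  filter_upwards [Ioo_mem_nhdsLT_of_mem (Set.mem_Ioc.2 ⟨hab, le_refl b⟩)] with x hx
  exact (hpos x hx).le

lemma sign_const {a b : ℝ} (hab : a < b) (f : ℝ → ℝ) (hf : ContinuousOn f (Set.Icc a b))
    (hne : ∀ x ∈ Set.Ioo a b, f x ≠ 0) :
    (∀ x ∈ Set.Ioo a b, 0 < f x) ∨ (∀ x ∈ Set.Ioo a b, f x < 0) := by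
  set c := (a + b) / 2 with hcdef
  have hc : c ∈ Set.Ioo a b := by constructor <;> [skip; skip] <;> simp only [hcdef] <;> linarith
  have key : ∀ x ∈ Set.Ioo a b, 0 < f x ∨ f x < 0 := by
    intro x hx
    rcases lt_trichotomy (f x) 0 with h | h | h
    · exact Or.inr h
    · exact absurd h (hne x hx)
    · exact Or.inl h
  have main : ∀ x ∈ Set.Ioo a b, ∀ y ∈ Set.Ioo a b, 0 < f x → 0 < f y := by
    intro x hx y hy hfx
    rcases key y hy with h | h
    · exact h
    · exfalso
      have hsub : Set.uIcc y x ⊆ Set.Ioo a b :=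
        (Set.ordConnected_Ioo).uIcc_subset hy hx
      have hcont : ContinuousOn f (Set.uIcc y x) :=
        hf.mono (hsub.trans Set.Ioo_subset_Icc_self)
      have h0 : (0:ℝ) ∈ Set.uIcc (f y) (f x) := by
        rw [Set.mem_uIcc]
        left; exact ⟨h.le, hfx.le⟩
      obtain ⟨z, hz, hz0⟩ := intermediate_value_uIcc hcont h0
      exact hne z (hsub hz) hz0
  rcases key c hc with h | h
  · exact Or.inl (fun x hx => main c hc x hx h)
  · right
    intro x hx
    by_contra hcon
    push_neg at hcon
    rcases key x hx with h' | h'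
    · exact absurd (main x hx c hc h') (not_lt.2 h.le)
    · exact absurd h' (not_lt.2 hcon)

lemma hasDerivAt_sinaff (k a φ : ℝ) (x : ℝ) :
    HasDerivAt (fun x => Real.sin (k * (x - a) + φ)) (Real.cos (k * (x - a) + φ) * k) x := by
  have hi : HasDerivAt (fun x : ℝ => k * (x - a) + φ) k x := by
    simpa using (((hasDerivAt_id x).sub_const a).const_mul k).add_const φ
  exact hi.sin

lemma hasDerivAt_sinaff2 (k a φ : ℝ) (x : ℝ) :
    HasDerivAt (fun x => Real.cos (k * (x - a) + φ) * k)
      (-(k ^ 2) * Real.sin (k * (x - a) + φ)) x := by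
  have hi : HasDerivAt (fun x : ℝ => k * (x - a) + φ) k x := by
    simpa using (((hasDerivAt_id x).sub_const a).const_mul k).add_const φ
  have h := hi.cos.mul_const k
  convert h using 1
  · rfl
  · rfl
  ring

lemma qB_bounds (hν : 0 ≤ ν) {k : ℝ} (hk : 1 < k) :
    ∃ X : ℝ, 1 ≤ X ∧ ∀ x : ℝ, X ≤ x → 1 / k ^ 2 < qB ν x ∧ qB ν x < k ^ 2 := by
  set M := |1/4 - ν ^ 2| with hMdef
  have hM : 0 ≤ M := abs_nonneg _
  have hk2 : 1 < k ^ 2 := by nlinarith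
  set ε := min (k ^ 2 - 1) (1 - 1 / k ^ 2) with hεdef
  have hε : 0 < ε := by
    apply lt_min (by linarith)
    have : 1 / k ^ 2 < 1 := by
      rw [div_lt_one (by positivity)]
      exact hk2
    linarith
  refine ⟨max 1 (M / ε + 1), le_max_left _ _, fun x hx => ?_⟩
  have hx1 : 1 ≤ x := le_trans (le_max_left _ _) hx
  have hx0 : 0 < x := by linarith
  have hxM : M / ε + 1 ≤ x := le_trans (le_max_right _ _) hx
  have hx2 : M / ε < x ^ 2 := by nlinarith
  have hr : |(1/4 - ν ^ 2) / x ^ 2| < ε := by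
    rw [abs_div, abs_of_pos (by positivity : (0:ℝ) < x ^ 2), div_lt_iff₀ (by positivity)]
    calc M < ε * (M / ε + 1) := by
          rw [mul_add, mul_one, mul_div_cancel₀ _ hε.ne']
          linarith
      _ ≤ ε * x ^ 2 := by
          apply mul_le_mul_of_nonneg_left _ hε.le
          nlinarith
  rw [abs_lt] at hr
  have hε1 : ε ≤ k ^ 2 - 1 := min_le_left _ _
  have hε2 : ε ≤ 1 - 1 / k ^ 2 := min_le_right _ _
  constructor
  · rw [qB]; linarith [hr.1]
  · rw [qB]; linarith [hr.2]

lemma zero_in (hν : 0 ≤ ν) {k X : ℝ} (hk : 1 < k) (hX : 1 ≤ X)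
    (hq : ∀ x : ℝ, X ≤ x → 1 / k ^ 2 < qB ν x) {a : ℝ} (ha : X ≤ a) :
    ∃ z : ℝ, a ≤ z ∧ z ≤ a + Real.pi * k ∧ besselJ ν z = 0 := by
  by_contra hcon
  push_neg at hcon
  have hπ := Real.pi_pos
  have hk0 : 0 < k := by linarith
  set b := a + Real.pi * k with hbdef
  have hab : a < b := by simp only [hbdef]; nlinarith
  have hposx : ∀ x ∈ Set.Icc a b, 0 < x := fun x hx => by
    have := hx.1; linarith
  have hvne : ∀ x ∈ Set.Ioo a b, uB ν x ≠ 0 := by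
    intro x hx h0
    have hx0 : 0 < x := hposx x (Set.Ioo_subset_Icc_self hx)
    exact hcon x hx.1.le hx.2.le ((uB_zero_iff hν hx0).1 h0)
  have hvcont : ContinuousOn (uB ν) (Set.Icc a b) := fun x hx =>
    (hasDerivAt_uB hν (hposx x hx)).continuousAt.continuousWithinAt
  -- the sine comparison solution
  set u : ℝ → ℝ := fun x => Real.sin ((1/k) * (x - a) + 0) with hudef
  set u' : ℝ → ℝ := fun x => Real.cos ((1/k) * (x - a) + 0) * (1/k) with hu'def
  have hu : ∀ x ∈ Set.Icc a b, HasDerivAt u (u' x) x := fun x _ => hasDerivAt_sinaff _ _ _ x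
  have hu'd : ∀ x ∈ Set.Icc a b, HasDerivAt u' (-((fun _ : ℝ => 1/k^2) x) * u x) x := by
    intro x _
    have h := hasDerivAt_sinaff2 (1/k) a 0 x
    convert h using 1
    simp only [hudef]
    ring
  have hua : u a = 0 := by simp [hudef]
  have hub : u b = 0 := by
    simp only [hudef, hbdef]
    rw [show (1/k) * (a + Real.pi * k - a) + 0 = Real.pi by field_simp; ring]
    exact Real.sin_pi
  have hupos : ∀ x ∈ Set.Ioo a b, 0 < u x := by
    intro x hx
    apply Real.sin_pos_of_pos_of_lt_pi
    · have : 0 < x - a := by linarith [hx.1]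
      positivity
    · have h2 : x - a < Real.pi * k := by
        have := hx.2; simp only [hbdef] at this; linarith
      rw [add_zero, one_div, inv_mul_lt_iff₀ hk0]
      linarith
  have hqp : ∀ x ∈ Set.Ioo a b, (fun _ : ℝ => 1/k^2) x < qB ν x := by
    intro x hx
    exact hq x (le_trans ha hx.1.le)
  -- choose the sign of uB on the interval
  have haI : a ∈ Set.Icc a b := Set.mem_Icc.2 ⟨le_refl a, hab.le⟩
  have hbI : b ∈ Set.Icc a b := Set.mem_Icc.2 ⟨hab.le, le_refl b⟩
  have hca : ContinuousAt (uB ν) a := (hasDerivAt_uB hν (hposx a haI)).continuousAt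
  have hcb : ContinuousAt (uB ν) b := (hasDerivAt_uB hν (hposx b hbI)).continuousAt
  rcases sign_const hab (uB ν) hvcont hvne with hsgn | hsgn
  · exact sturm hab u u' (uB ν) (uB1 ν) (fun _ => 1/k^2) (qB ν) hu hu'd
      (fun x hx => hasDerivAt_uB hν (hposx x hx))
      (fun x hx => hasDerivAt_uB1 hν (hposx x hx))
      hua hub hupos hsgn
      (endpoint_nonneg_left hab _ hca hsgn)
      (endpoint_nonneg_right hab _ hcb hsgn) hqp
  · have hsgn' : ∀ x ∈ Set.Ioo a b, 0 < -uB ν x := by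
      intro x hx; simpa using hsgn x hx
    refine sturm hab u u' (fun x => -uB ν x) (fun x => -uB1 ν x) (fun _ => 1/k^2) (qB ν) hu hu'd
      (fun x hx => (hasDerivAt_uB hν (hposx x hx)).neg)
      (fun x hx => ?_)
      hua hub hupos hsgn'
      (endpoint_nonneg_left hab _ hca.neg hsgn')
      (endpoint_nonneg_right hab _ hcb.neg hsgn') hqp
    have h := (hasDerivAt_uB1 hν (hposx x hx)).neg
    convert h using 1
    · rfl
    · rfl
    · rfl
    ring

end BesselGap

/-- The difference between consecutive positive zeros of `J_ν` tends to `π`. -/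
theorem bessel_zero_gap_tendsto_pi (ν : ℝ) (hν : 0 ≤ ν)
    (lam : ℕ → ℝ) (hmono : StrictMono lam) (hpos : ∀ j, 0 < lam j)
    (hzero : ∀ j, besselJ ν (lam j) = 0)
    (hall : ∀ x, 0 < x → besselJ ν x = 0 → ∃ j, lam j = x) :
    Tendsto (fun j => lam (j + 1) - lam j) atTop (nhds Real.pi) := by
  rw [Metric.tendsto_atTop]
  intro δ hδ
  have hπ := Real.pi_pos
  obtain ⟨k, hk, hπk⟩ : ∃ k : ℝ, 1 < k ∧ Real.pi * (k - 1) = δ / 4 := by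
    refine ⟨1 + δ / (4 * Real.pi), ?_, ?_⟩
    · have : 0 < δ / (4 * Real.pi) := by positivity
      linarith
    · field_simp
      ring
  have hk0 : 0 < k := by linarith
  obtain ⟨X, hX1, hXq⟩ := BesselGap.qB_bounds (ν := ν) hν hk
  have hzeroI : ∀ a : ℝ, X ≤ a →
      ∃ z, a ≤ z ∧ z ≤ a + Real.pi * k ∧ besselJ ν z = 0 :=
    fun a ha => BesselGap.zero_in hν hk hX1 (fun x hx => (hXq x hx).1) ha
  obtain ⟨N, hN⟩ : ∃ N : ℕ, ∀ j, N ≤ j → X ≤ lam j := by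
    obtain ⟨z, hz1, hz2, hz3⟩ := hzeroI X (le_refl X)
    have hz0 : 0 < z := by linarith
    obtain ⟨i, hi⟩ := hall z hz0 hz3
    refine ⟨i, fun j hj => ?_⟩
    calc X ≤ z := hz1
      _ = lam i := hi.symm
      _ ≤ lam j := hmono.monotone hj
  refine ⟨N, fun j hj => ?_⟩
  have hXj : X ≤ lam j := hN j hj
  have hposj : 0 < lam j := hpos j
  -- upper bound for the gap
  have hup : lam (j + 1) - lam j ≤ Real.pi * (2 * k - 1) := by
    obtain ⟨z, hz1, hz2, hz3⟩ := hzeroI (lam j + Real.pi * (k - 1)) (by nlinarith)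
    have hz0 : 0 < z := by nlinarith
    obtain ⟨i, hi⟩ := hall z hz0 hz3
    have hji : lam j < lam i := by rw [hi]; nlinarith
    have hij : j < i := hmono.lt_iff_lt.mp hji
    have h1 : lam (j + 1) ≤ lam i := hmono.monotone (Nat.succ_le_of_lt hij)
    rw [hi] at h1
    nlinarith
  -- lower bound for the gap
  have hlo : Real.pi / k ≤ lam (j + 1) - lam j := by
    by_contra hcon
    push_neg at hcon
    set a := lam j with hadef
    set b := lam (j + 1) with hbdef
    have hab : a < b := hmono (Nat.lt_succ_self j)
    have hposx : ∀ x ∈ Set.Icc a b, 0 < x := fun x hx => lt_of_lt_of_le hposj hx.1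
    have hnz : ∀ x ∈ Set.Ioo a b, BesselGap.uB ν x ≠ 0 := by
      intro x hx h0
      have hx0 : 0 < x := hposx x (Set.Ioo_subset_Icc_self hx)
      obtain ⟨i, hi⟩ := hall x hx0 ((BesselGap.uB_zero_iff hν hx0).1 h0)
      have h1 : j < i := hmono.lt_iff_lt.mp (by rw [hi]; exact hx.1)
      have h2 : i < j + 1 := hmono.lt_iff_lt.mp (by rw [hi]; exact hx.2)
      omega
    have hvcont : ContinuousOn (BesselGap.uB ν) (Set.Icc a b) := fun x hx =>
      (BesselGap.hasDerivAt_uB hν (hposx x hx)).continuousAt.continuousWithinAt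
    set φ : ℝ := (Real.pi - k * (b - a)) / 2 with hφdef
    have hkba : k * (b - a) < Real.pi := by
      have h1 : b - a < Real.pi / k := hcon
      calc k * (b - a) < k * (Real.pi / k) := by
            apply mul_lt_mul_of_pos_left h1 hk0
        _ = Real.pi := by field_simp
    have hφ : 0 < φ := by simp only [hφdef]; linarith
    set v : ℝ → ℝ := fun x => Real.sin (k * (x - a) + φ) with hvdef
    set v' : ℝ → ℝ := fun x => Real.cos (k * (x - a) + φ) * k with hv'def
    have hv : ∀ x ∈ Set.Icc a b, HasDerivAt v (v' x) x :=
      fun x _ => BesselGap.hasDerivAt_sinaff _ _ _ x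
    have hv'd : ∀ x ∈ Set.Icc a b, HasDerivAt v' (-((fun _ : ℝ => k ^ 2) x) * v x) x :=
      fun x _ => BesselGap.hasDerivAt_sinaff2 _ _ _ x
    have hvpos : ∀ x ∈ Set.Icc a b, 0 < v x := by
      intro x hx
      apply Real.sin_pos_of_pos_of_lt_pi
      · have h1 : 0 ≤ k * (x - a) := mul_nonneg hk0.le (by linarith [hx.1])
        linarith
      · have h1 : k * (x - a) ≤ k * (b - a) :=
          mul_le_mul_of_nonneg_left (by linarith [hx.2]) hk0.le
        simp only [hφdef]
        linarith
    have hqp : ∀ x ∈ Set.Ioo a b, BesselGap.qB ν x < (fun _ : ℝ => k ^ 2) x := by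
      intro x hx
      exact (hXq x (le_trans hXj hx.1.le)).2
    have hua : BesselGap.uB ν a = 0 := (BesselGap.uB_zero_iff hν hposj).2 (hzero j)
    have hub : BesselGap.uB ν b = 0 := (BesselGap.uB_zero_iff hν (hpos (j+1))).2 (hzero (j+1))
    rcases BesselGap.sign_const hab (BesselGap.uB ν) hvcont hnz with hsgn | hsgn
    · exact BesselGap.sturm hab (BesselGap.uB ν) (BesselGap.uB1 ν) v v'
        (BesselGap.qB ν) (fun _ => k ^ 2)
        (fun x hx => BesselGap.hasDerivAt_uB hν (hposx x hx))
        (fun x hx => BesselGap.hasDerivAt_uB1 hν (hposx x hx))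
        hv hv'd hua hub hsgn
        (fun x hx => hvpos x (Set.Ioo_subset_Icc_self hx))
        (hvpos a (Set.mem_Icc.2 ⟨le_refl a, hab.le⟩)).le
        (hvpos b (Set.mem_Icc.2 ⟨hab.le, le_refl b⟩)).le hqp
    · have hsgn' : ∀ x ∈ Set.Ioo a b, 0 < -BesselGap.uB ν x := by
        intro x hx; simpa using hsgn x hx
      refine BesselGap.sturm hab (fun x => -BesselGap.uB ν x) (fun x => -BesselGap.uB1 ν x) v v'
        (BesselGap.qB ν) (fun _ => k ^ 2)
        (fun x hx => (BesselGap.hasDerivAt_uB hν (hposx x hx)).neg)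
        (fun x hx => ?_)
        hv hv'd (by show -BesselGap.uB ν a = 0; rw [hua, neg_zero])
        (by show -BesselGap.uB ν b = 0; rw [hub, neg_zero]) hsgn'
        (fun x hx => hvpos x (Set.Ioo_subset_Icc_self hx))
        (hvpos a (Set.mem_Icc.2 ⟨le_refl a, hab.le⟩)).le
        (hvpos b (Set.mem_Icc.2 ⟨hab.le, le_refl b⟩)).le hqp
      have h := (BesselGap.hasDerivAt_uB1 hν (hposx x hx)).neg
      convert h using 1
      · rfl
      · rfl
      · rfl
      ring
  rw [Real.dist_eq, abs_lt]
  have hk1 : Real.pi - Real.pi / k ≤ Real.pi * (k - 1) := by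
    rw [sub_le_iff_le_add]
    have h1 : Real.pi = (Real.pi / k) * k := by field_simp
    nlinarith [div_pos hπ hk0]
  constructor
  · linarith
  · linarith
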